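/- arXiv:1907.03373 — 5 statements merged into one kernel-verified Lean document; each statement's English description precedes it below -/
import Mathlib

section
/- Let m features be hashed independently and uniformly into n bins, and let 1 ≤ k ≤ m/n. The probability that every bin contains at least k features is at least 1 − C(m, k−1)·(n−1)^(m−k+1)/n^(m−1) · (m−k+2)/(m−nk+n+1). -/
open Finset

private def stmt4_fiberEquiv {m n : ℕ} (b : Fin n) (T : Finset (Fin m)) :
    {h : Fin m → Fin n // ∀ j, h j = b ↔ j ∈ T} ≃ ({j : Fin m // j ∉ T} → {c : Fin n // c ≠ b}) where
  toFun h j := ⟨h.1 j.1, fun e => j.2 ((h.2 j.1).mp e)⟩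
  invFun g := ⟨fun j => if hj : j ∈ T then b else (g ⟨j, hj⟩).1, by
    intro j
    by_cases hj : j ∈ T <;> simp [hj]
    exact (g ⟨j, hj⟩).2⟩
  left_inv h := by
    ext j
    by_cases hj : j ∈ T <;> simp [hj]
    exact congrArg Fin.val ((h.2 j).mpr hj).symm
  right_inv g := by
    ext j
    simp [j.2]
private lemma count_fiber_eq (m n : ℕ) (b : Fin n) (T : Finset (Fin m)) :
    (univ.filter (fun h : Fin m → Fin n => univ.filter (fun j => h j = b) = T)).card
      = (n - 1) ^ (m - T.card) := by
  rw [← Fintype.card_subtype]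
  have e1 : {h : Fin m → Fin n // univ.filter (fun j => h j = b) = T}
      ≃ {h : Fin m → Fin n // ∀ j, h j = b ↔ j ∈ T} :=
    Equiv.subtypeEquivRight (by
      intro h
      rw [Finset.ext_iff]
      simp)
  rw [Fintype.card_congr (e1.trans (stmt4_fiberEquiv b T)), Fintype.card_fun]
  congr 1
  · rw [Fintype.card_subtype_compl, Fintype.card_subtype_eq, Fintype.card_fin]
  · rw [Fintype.card_subtype_compl, Fintype.card_fin, Fintype.card_coe]

private lemma count_small_fiber (m n c : ℕ) (b : Fin n) :
    (univ.filter (fun h : Fin m → Fin n => (univ.filter (fun j => h j = b)).card ≤ c)).card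
      = ∑ i ∈ range (c+1), m.choose i * (n - 1) ^ (m - i) := by
  classical
  set s := univ.filter (fun h : Fin m → Fin n => (univ.filter (fun j => h j = b)).card ≤ c) with hs
  set t := (univ : Finset (Finset (Fin m))).filter (fun T => T.card ≤ c) with ht
  have h1 : s.card = ∑ T ∈ t, (s.filter (fun h => univ.filter (fun j => h j = b) = T)).card := by
    apply Finset.card_eq_sum_card_fiberwise
    intro h hh
    simp only [hs, mem_filter, mem_univ, true_and] at hh ⊢
    simp only [ht, mem_filter, mem_univ, true_and]
    simpa [hs, ht] using hh
  rw [h1]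
  have h2 : ∀ T ∈ t, (s.filter (fun h => univ.filter (fun j => h j = b) = T)).card
      = (n - 1) ^ (m - T.card) := by
    intro T hT
    rw [← count_fiber_eq m n b T]
    congr 1
    ext h
    simp only [hs, mem_filter, mem_univ, true_and, ht] at hT ⊢
    constructor
    · rintro ⟨-, h2⟩; exact h2
    · intro h2; exact ⟨by rw [h2]; exact hT, h2⟩
  rw [Finset.sum_congr rfl h2]
  have h3 : ∑ T ∈ t, (n - 1) ^ (m - T.card)
      = ∑ i ∈ range (c+1), ∑ T ∈ t.filter (fun T => T.card = i), (n - 1) ^ (m - T.card) := by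
    apply (Finset.sum_fiberwise_of_maps_to ?_ _).symm
    intro T hT
    simp only [ht, mem_filter, mem_univ, true_and] at hT
    simpa using Nat.lt_succ_of_le hT
  rw [h3]
  refine Finset.sum_congr rfl fun i hi => ?_
  have h4 : t.filter (fun T => T.card = i) = Finset.powersetCard i univ := by
    ext T
    simp only [ht, mem_filter, mem_univ, true_and, Finset.mem_powersetCard_univ]
    constructor
    · rintro ⟨-, h⟩; exact h
    · intro h
      simp only [mem_range] at hi
      exact ⟨h ▸ Nat.lt_succ_iff.mp hi, h⟩
  rw [h4]
  have h5 : ∀ T ∈ Finset.powersetCard i (univ : Finset (Fin m)),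
      (n - 1) ^ (m - T.card) = (n - 1) ^ (m - i) := by
    intro T hT
    rw [Finset.mem_powersetCard_univ] at hT
    rw [hT]
  rw [Finset.sum_congr rfl h5, Finset.sum_const, Finset.card_powersetCard, Finset.card_univ,
    Fintype.card_fin, smul_eq_mul]

private lemma main_count (m n k : ℕ) (hk : 1 ≤ k) :
    n ^ m ≤ Nat.card {h : Fin m → Fin n //
        ∀ b : Fin n, k ≤ (Finset.univ.filter (fun j => h j = b)).card}
      + n * ∑ i ∈ range k, m.choose i * (n - 1) ^ (m - i) := by
  classical
  rw [Nat.card_eq_fintype_card, Fintype.card_subtype]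
  have hsplit := Finset.card_filter_add_card_filter_not
    (s := (univ : Finset (Fin m → Fin n)))
    (p := fun h => ∀ b : Fin n, k ≤ (univ.filter (fun j => h j = b)).card)
  have hcard : (univ : Finset (Fin m → Fin n)).card = n ^ m := by
    rw [Finset.card_univ, Fintype.card_fun, Fintype.card_fin, Fintype.card_fin]
  have hbad : (univ.filter (fun h : Fin m → Fin n =>
      ¬ ∀ b : Fin n, k ≤ (univ.filter (fun j => h j = b)).card)).card
      ≤ n * ∑ i ∈ range k, m.choose i * (n - 1) ^ (m - i) := by
    have hsub : (univ.filter (fun h : Fin m → Fin n =>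
        ¬ ∀ b : Fin n, k ≤ (univ.filter (fun j => h j = b)).card))
        ⊆ univ.biUnion (fun b : Fin n => univ.filter
          (fun h : Fin m → Fin n => (univ.filter (fun j => h j = b)).card ≤ k - 1)) := by
      intro h hh
      simp only [mem_filter, mem_univ, true_and, not_forall, not_le] at hh
      obtain ⟨b, hb⟩ := hh
      simp only [mem_biUnion, mem_univ, true_and, mem_filter]
      exact ⟨b, Nat.le_pred_of_lt hb⟩
    calc _ ≤ _ := Finset.card_le_card hsub
      _ ≤ ∑ b : Fin n, (univ.filter
          (fun h : Fin m → Fin n => (univ.filter (fun j => h j = b)).card ≤ k - 1)).card :=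
        Finset.card_biUnion_le
      _ = ∑ b : Fin n, ∑ i ∈ range k, m.choose i * (n - 1) ^ (m - i) := by
        refine Finset.sum_congr rfl fun b _ => ?_
        rw [count_small_fiber m n (k-1) b]
        rw [Nat.sub_add_cancel hk]
      _ = n * ∑ i ∈ range k, m.choose i * (n - 1) ^ (m - i) := by
        rw [Finset.sum_const, Finset.card_univ, Fintype.card_fin, smul_eq_mul]
  rw [hcard] at hsplit
  calc n ^ m = _ + _ := hsplit.symm
    _ ≤ _ := Nat.add_le_add_left hbad _

private lemma sum_le_bound (m n k : ℕ) (hn : 2 ≤ n) (hk : 1 ≤ k) (hkm : n * k ≤ m) :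
    (∑ i ∈ range k, (m.choose i : ℝ) * ((n : ℝ) - 1) ^ (m - i))
      ≤ (m.choose (k - 1) : ℝ) * ((n : ℝ) - 1) ^ (m - k + 1)
          * (((m : ℝ) - k + 2) / ((m : ℝ) - n * k + n + 1)) := by
  obtain ⟨k', rfl⟩ : ∃ k', k = k' + 1 := ⟨k - 1, by omega⟩
  have hkm' : k' + 1 ≤ m := le_trans (by nlinarith) hkm
  set A : ℝ := (n : ℝ) - 1 with hA
  have hncast : (2 : ℝ) ≤ (n : ℝ) := by exact_mod_cast hn
  have hA1 : (1 : ℝ) ≤ A := by simp only [hA]; linarith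
  have hA0 : (0 : ℝ) < A := lt_of_lt_of_le one_pos hA1
  set t : ℕ → ℝ := fun i => (m.choose i : ℝ) * A ^ (m - i) with ht
  have htpos : ∀ i, 0 ≤ t i := fun i => mul_nonneg (Nat.cast_nonneg _) (pow_nonneg hA0.le _)
  set D : ℝ := (m : ℝ) - k' + 1 with hD
  have hmcast : (n : ℝ) * ((k' : ℝ) + 1) ≤ (m : ℝ) := by exact_mod_cast hkm
  have hD0 : 0 < D := by
    have : (k' : ℝ) + 1 ≤ (m : ℝ) := by exact_mod_cast hkm'
    simp only [hD]; linarith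
  set r : ℝ := (k' : ℝ) * A / D with hr
  have hr0 : 0 ≤ r := div_nonneg (mul_nonneg (Nat.cast_nonneg _) hA0.le) hD0.le
  have hnum : (0 : ℝ) < (m : ℝ) - n * (k' + 1) + n + 1 := by push_cast; nlinarith
  have hgap : (k' : ℝ) * A < D := by
    simp only [hD, hA]
    nlinarith
  have hr1 : r < 1 := by
    rw [hr, div_lt_one hD0]; exact hgap
  have key : ∀ j, j ≤ k' → t (k' - j) ≤ t k' * r ^ j := by
    intro j
    induction j with
    | zero => intro _; simp
    | succ j ih =>
      intro hj
      have hj' : j ≤ k' := Nat.le_of_succ_le hj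
      have ihj := ih hj'
      set i := k' - (j + 1) with hi
      have hi1 : i + 1 = k' - j := by omega
      have hik : i + 1 ≤ k' := by omega
      have him : i + 1 ≤ m := by omega
      have hmi : (0 : ℝ) < (m : ℝ) - i := by
        have : (i : ℝ) + 1 ≤ (m : ℝ) := by exact_mod_cast him
        linarith
      have hchoose : (m.choose (i+1) : ℝ) * ((i : ℝ) + 1) = (m.choose i : ℝ) * ((m : ℝ) - i) := by
        have h := Nat.choose_succ_right_eq m i
        have h2 : ((m.choose (i+1) * (i+1) : ℕ) : ℝ) = ((m.choose i * (m - i) : ℕ) : ℝ) := by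
          exact_mod_cast congrArg (Nat.cast (R := ℝ)) h
        rw [Nat.cast_mul, Nat.cast_mul, Nat.cast_sub (Nat.le_of_succ_le him)] at h2
        push_cast at h2
        linarith
      have hpow : A ^ (m - i) = A ^ (m - (i+1)) * A := by
        rw [← pow_succ]
        congr 1
        omega
      have hrec : t i * ((m : ℝ) - i) = t (i+1) * ((i : ℝ) + 1) * A := by
        simp only [ht]
        rw [hpow]
        linear_combination (-(A ^ (m - (i+1)) * A)) * hchoose
      have hcross : ((i : ℝ) + 1) * A ≤ r * ((m : ℝ) - i) := by
        rw [hr, div_mul_eq_mul_div, le_div_iff₀ hD0]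
        have h1 : (i : ℝ) + 1 ≤ (k' : ℝ) := by exact_mod_cast hik
        have h2 : (m : ℝ) + 1 ≥ 0 := by positivity
        have hid : (k' : ℝ) * A * ((m : ℝ) - i) - ((i : ℝ) + 1) * A * D
            = A * (((k' : ℝ) - ((i : ℝ) + 1)) * ((m : ℝ) + 1)) := by
          simp only [hD]; ring
        have hpos : 0 ≤ A * (((k' : ℝ) - ((i : ℝ) + 1)) * ((m : ℝ) + 1)) :=
          mul_nonneg hA0.le (mul_nonneg (by linarith) h2)
        linarith
      have hstep : t i ≤ t (i+1) * r := by
        have h1 : t i * ((m : ℝ) - i) ≤ (t (i+1) * r) * ((m : ℝ) - i) := by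
          rw [hrec]
          calc t (i+1) * ((i : ℝ) + 1) * A = t (i+1) * (((i : ℝ) + 1) * A) := by ring
            _ ≤ t (i+1) * (r * ((m : ℝ) - i)) := mul_le_mul_of_nonneg_left hcross (htpos (i+1))
            _ = t (i+1) * r * ((m : ℝ) - i) := by ring
        exact le_of_mul_le_mul_right h1 hmi
      calc t (k' - (j+1)) = t i := rfl
        _ ≤ t (i+1) * r := hstep
        _ = t (k' - j) * r := by rw [hi1]
        _ ≤ t k' * r ^ j * r := mul_le_mul_of_nonneg_right ihj hr0
        _ = t k' * r ^ (j+1) := by ring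
  have hsum : ∑ i ∈ range (k'+1), t i ≤ t k' * ∑ j ∈ range (k'+1), r ^ j := by
    rw [Finset.mul_sum, ← Finset.sum_range_reflect (fun i => t i) (k'+1)]
    apply Finset.sum_le_sum
    intro j hj
    simp only [mem_range] at hj
    simpa using key j (by omega)
  have h1r0 : 0 < 1 - r := by linarith
  have hgeom : ∑ j ∈ range (k'+1), r ^ j ≤ 1 / (1 - r) := by
    rw [geom_sum_eq (ne_of_lt hr1)]
    have hrw : (r ^ (k'+1) - 1) / (r - 1) = (1 - r ^ (k'+1)) / (1 - r) := by
      rw [← neg_div_neg_eq]; ring_nf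
    rw [hrw]
    gcongr
    nlinarith [pow_nonneg hr0 (k'+1)]
  have h1r : 1 - r = ((m : ℝ) - n * ((k' : ℝ)+1) + n + 1) / D := by
    rw [hr, eq_div_iff hD0.ne', sub_mul, div_mul_cancel₀ _ hD0.ne', hD, hA]
    ring
  calc ∑ i ∈ range (k'+1), t i ≤ t k' * ∑ j ∈ range (k'+1), r ^ j := hsum
    _ ≤ t k' * (1 / (1 - r)) := mul_le_mul_of_nonneg_left hgeom (htpos k')
    _ = t k' * (D / ((m : ℝ) - n * ((k' : ℝ)+1) + n + 1)) := by rw [h1r, one_div, inv_div]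
    _ = (m.choose (k'+1-1) : ℝ) * A ^ (m - (k'+1) + 1)
        * (((m : ℝ) - ((k' : ℝ)+1) + 2) / ((m : ℝ) - n * ((k' : ℝ)+1) + n + 1)) := by
        simp only [ht, hD, Nat.add_sub_cancel]
        have he : m - (k'+1) + 1 = m - k' := by omega
        rw [he]
        ring
    _ = _ := by push_cast; ring

/-- With `m` features hashed uniformly into `n` bins and `1 ≤ k ≤ m/n`,
the probability that every bin contains at least `k` features is at least
`1 - C(m,k-1) * (n-1)^(m-k+1)/n^(m-1) * (m-k+2)/(m-nk+n+1)`. -/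
theorem stmt_4 (m n k : ℕ) (hm : 1 ≤ m) (hn : 2 ≤ n) (hk : 1 ≤ k) (hkm : n * k ≤ m) :
    (Nat.card {h : Fin m → Fin n //
        ∀ b : Fin n, k ≤ (Finset.univ.filter (fun j => h j = b)).card} : ℝ) / (n : ℝ) ^ m
      ≥ 1 - (m.choose (k - 1) : ℝ) * ((n : ℝ) - 1) ^ (m - k + 1) / (n : ℝ) ^ (m - 1)
          * (((m : ℝ) - k + 2) / ((m : ℝ) - n * k + n + 1)) := by
  classical
  have hn1 : 1 ≤ n := by omega
  have hS := main_count m n k hk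
  set S : ℝ := ∑ i ∈ range k, (m.choose i : ℝ) * ((n : ℝ) - 1) ^ (m - i) with hSdef
  have hScast : ((∑ i ∈ range k, m.choose i * (n - 1) ^ (m - i) : ℕ) : ℝ) = S := by
    rw [hSdef]
    push_cast [Nat.cast_sub hn1]
    ring
  have hcast := (Nat.cast_le (α := ℝ)).mpr hS
  push_cast [Nat.cast_sub hn1] at hcast
  set G : ℝ := (Nat.card {h : Fin m → Fin n //
      ∀ b : Fin n, k ≤ (Finset.univ.filter (fun j => h j = b)).card} : ℝ) with hG
  have hcast' : (n : ℝ) ^ m ≤ G + (n : ℝ) * S := hcast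
  have hB := sum_le_bound m n k hn hk hkm
  set C : ℝ := (m.choose (k - 1) : ℝ) * ((n : ℝ) - 1) ^ (m - k + 1)
      * (((m : ℝ) - k + 2) / ((m : ℝ) - n * k + n + 1)) with hC
  have hn0 : (0 : ℝ) < (n : ℝ) := by positivity
  have hP : (0 : ℝ) < (n : ℝ) ^ m := by positivity
  have hP1 : (0 : ℝ) < (n : ℝ) ^ (m - 1) := by positivity
  have hpow : (n : ℝ) ^ m = (n : ℝ) ^ (m - 1) * n := by
    rw [← pow_succ]
    congr 1
    exact (Nat.succ_pred_eq_of_pos hm).symm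
  set B : ℝ := (m.choose (k - 1) : ℝ) * ((n : ℝ) - 1) ^ (m - k + 1) / (n : ℝ) ^ (m - 1)
      * (((m : ℝ) - k + 2) / ((m : ℝ) - n * k + n + 1)) with hBdef
  have hBC' : B = C / (n : ℝ) ^ (m - 1) := by
    rw [hBdef, hC]; ring
  have hBC : (n : ℝ) ^ m * B = (n : ℝ) * C := by
    have hr : (n : ℝ) ^ (m - 1) * n * (C * ((n : ℝ) ^ (m - 1))⁻¹)
        = (n : ℝ) * C * ((n : ℝ) ^ (m - 1) * ((n : ℝ) ^ (m - 1))⁻¹) := by ring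
    rw [hBC', hpow, div_eq_mul_inv, hr, mul_inv_cancel₀ hP1.ne', mul_one]
  have hkey : (n : ℝ) * S ≤ (n : ℝ) ^ m * B := by
    rw [hBC]
    exact mul_le_mul_of_nonneg_left hB hn0.le
  rw [ge_iff_le]
  calc 1 - B = ((n : ℝ) ^ m - (n : ℝ) ^ m * B) / (n : ℝ) ^ m := by
        rw [eq_div_iff hP.ne']; ring
    _ ≤ ((n : ℝ) ^ m - (n : ℝ) * S) / (n : ℝ) ^ m := by
        gcongr
    _ ≤ G / (n : ℝ) ^ m := by
        gcongr
        linarith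
end

section
/- For integers m ≥ 1, n ≥ 2, and 1 ≤ k ≤ m/n, the partial binomial sum satisfies ∑_{l=0}^{k−1} C(m, l)·(1/(n−1))^l ≤ C(m, k−1)·(1/(n−1))^(k−1) · (m−k+2)/(m−nk+n+1). -/
/-- For `m ≥ 1`, `n ≥ 2`, `1 ≤ k ≤ m/n`,
`∑_{l=0}^{k-1} C(m,l) (1/(n-1))^l ≤ C(m,k-1) (1/(n-1))^(k-1) * (m-k+2)/(m-nk+n+1)`. -/
theorem stmt_5 (m n k : ℕ) (hm : 1 ≤ m) (hn : 2 ≤ n) (hk : 1 ≤ k) (hkm : n * k ≤ m) :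
    ∑ l ∈ Finset.range k, (m.choose l : ℝ) * (1 / ((n : ℝ) - 1)) ^ l
      ≤ (m.choose (k - 1) : ℝ) * (1 / ((n : ℝ) - 1)) ^ (k - 1)
          * (((m : ℝ) - k + 2) / ((m : ℝ) - n * k + n + 1)) := by
  have hn' : (2:ℝ) ≤ n := by exact_mod_cast hn
  have hk' : (1:ℝ) ≤ k := by exact_mod_cast hk
  have hm' : (n:ℝ) * k ≤ m := by exact_mod_cast hkm
  set c : ℝ := (n:ℝ) - 1 with hc
  have hc0 : 0 < c := by simp only [hc]; linarith
  have hkm' : (k:ℝ) ≤ m := by nlinarith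
  have hden : 0 < (m:ℝ) - k + 2 := by linarith
  have hden2 : 0 < (m:ℝ) - n * k + n + 1 := by nlinarith
  set r : ℝ := c * ((k:ℝ) - 1) / ((m:ℝ) - k + 2) with hrdef
  have hr0 : 0 ≤ r := by
    apply div_nonneg
    · nlinarith
    · linarith
  have hr1 : r < 1 := by
    rw [hrdef, div_lt_one hden]
    nlinarith
  set A : ℕ → ℝ := fun l => (m.choose l : ℝ) * (1 / c) ^ l with hA
  have hApos : ∀ l, 0 ≤ A l := fun l => by
    simp only [hA]; positivity
  have hstep : ∀ l : ℕ, l + 1 ≤ k - 1 → A l ≤ r * A (l + 1) := by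
    intro l hl
    have hl2 : l + 2 ≤ k := by omega
    have hlk : (l:ℝ) + 2 ≤ (k:ℝ) := by exact_mod_cast hl2
    have hlm : l < m := by
      have : 2 * k ≤ n * k := Nat.mul_le_mul_right k hn
      omega
    have hcho : (m.choose (l+1) : ℝ) * ((l:ℝ)+1) = (m.choose l : ℝ) * ((m:ℝ) - l) := by
      have h := Nat.choose_succ_right_eq m l
      have hml : ((m - l : ℕ) : ℝ) = (m:ℝ) - l := by
        rw [Nat.cast_sub hlm.le]
      calc (m.choose (l+1) : ℝ) * ((l:ℝ)+1)
          = ((m.choose (l+1) * (l+1) : ℕ) : ℝ) := by push_cast; ring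
        _ = ((m.choose l * (m - l) : ℕ) : ℝ) := by rw [h]
        _ = (m.choose l : ℝ) * ((m:ℝ) - l) := by push_cast [hml]; ring
    have hchpos : 0 < (m.choose l : ℝ) := by
      exact_mod_cast Nat.choose_pos hlm.le
    have h2 : (m:ℝ) - k + 2 ≤ (m:ℝ) - l := by linarith
    have h3 : ((l:ℝ)+1) * ((m:ℝ)-k+2) ≤ ((k:ℝ)-1) * ((m:ℝ)-l) :=
      mul_le_mul (by linarith) h2 (by linarith) (by linarith)
    have key : (m.choose l : ℝ) * ((m:ℝ)-(k:ℝ)+2) ≤ ((k:ℝ)-1) * (m.choose (l+1):ℝ) := by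
      have hlp : (0:ℝ) < (l:ℝ) + 1 := by positivity
      rw [← mul_le_mul_iff_of_pos_right hlp]
      calc (m.choose l : ℝ) * ((m:ℝ)-(k:ℝ)+2) * ((l:ℝ)+1)
          ≤ (m.choose l : ℝ) * (((k:ℝ)-1) * ((m:ℝ)-l)) := by
            nlinarith
        _ = ((k:ℝ)-1) * ((m.choose (l+1):ℝ) * ((l:ℝ)+1)) := by rw [hcho]; ring
        _ = ((k:ℝ)-1) * (m.choose (l+1):ℝ) * ((l:ℝ)+1) := by ring
    -- now expand A
    simp only [hA]
    have hpow : (1/c) ^ (l+1) = (1/c)^l * (1/c) := pow_succ _ _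
    rw [hrdef, hpow]
    have hcne : c ≠ 0 := ne_of_gt hc0
    have hppos : 0 < (1/c)^l := by positivity
    rw [div_mul_eq_mul_div, le_div_iff₀ hden]
    calc (m.choose l : ℝ) * (1/c)^l * ((m:ℝ) - k + 2)
        = ((m.choose l : ℝ) * ((m:ℝ)-(k:ℝ)+2)) * (1/c)^l := by ring
      _ ≤ (((k:ℝ)-1) * (m.choose (l+1):ℝ)) * (1/c)^l :=
          mul_le_mul_of_nonneg_right key hppos.le
      _ = c * ((k:ℝ)-1) * ((m.choose (l+1):ℝ) * ((1/c)^l * (1/c))) := by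
          field_simp
  have hdecay : ∀ j, j ≤ k - 1 → A (k - 1 - j) ≤ r ^ j * A (k - 1) := by
    intro j
    induction j with
    | zero => intro _; simp
    | succ j ih =>
      intro hj
      have hj' : j ≤ k - 1 := by omega
      have heq : k - 1 - j = (k - 1 - (j+1)) + 1 := by omega
      calc A (k - 1 - (j+1)) ≤ r * A ((k - 1 - (j+1)) + 1) := by
            apply hstep
            omega
        _ = r * A (k - 1 - j) := by rw [← heq]
        _ ≤ r * (r ^ j * A (k-1)) := by
            apply mul_le_mul_of_nonneg_left (ih hj') hr0
        _ = r ^ (j+1) * A (k-1) := by ring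
  have hsum : ∑ l ∈ Finset.range k, A l ≤ A (k-1) * (1 / (1 - r)) := by
    have h1 : ∑ l ∈ Finset.range k, A l = ∑ j ∈ Finset.range k, A (k - 1 - j) :=
      (Finset.sum_range_reflect A k).symm
    rw [h1]
    have h2 : ∑ j ∈ Finset.range k, A (k - 1 - j) ≤ ∑ j ∈ Finset.range k, r ^ j * A (k-1) := by
      apply Finset.sum_le_sum
      intro j hj
      exact hdecay j (by simp at hj; omega)
    have h3 : ∑ j ∈ Finset.range k, r ^ j * A (k-1) = (∑ j ∈ Finset.range k, r ^ j) * A (k-1) := by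
      rw [Finset.sum_mul]
    have h4 : (∑ j ∈ Finset.range k, r ^ j) ≤ 1 / (1 - r) := by
      have hrne : r ≠ 1 := ne_of_lt hr1
      rw [geom_sum_eq hrne]
      have h1r : 0 < 1 - r := by linarith
      have heq : (r ^ k - 1) / (r - 1) = (1 - r ^ k) / (1 - r) := by
        rw [div_eq_div_iff (by linarith) (by linarith)]
        ring
      rw [heq, div_le_div_iff₀ h1r h1r]
      nlinarith [pow_nonneg hr0 k]
    calc ∑ j ∈ Finset.range k, A (k - 1 - j) ≤ (∑ j ∈ Finset.range k, r ^ j) * A (k-1) := by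
          rw [← h3]; exact h2
      _ ≤ (1 / (1 - r)) * A (k-1) := by
          apply mul_le_mul_of_nonneg_right h4 (hApos _)
      _ = A (k-1) * (1 / (1 - r)) := by ring
  have hfinal : 1 / (1 - r) = ((m:ℝ) - k + 2) / ((m:ℝ) - n * k + n + 1) := by
    have h1r' : 1 - r = ((m:ℝ) - n * k + n + 1) / ((m:ℝ) - k + 2) := by
      rw [hrdef, hc, eq_div_iff (ne_of_gt hden)]
      field_simp
      ring
    rw [h1r', one_div_div]
  calc ∑ l ∈ Finset.range k, (m.choose l : ℝ) * (1 / c) ^ l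
      ≤ A (k-1) * (1 / (1 - r)) := hsum
    _ = (m.choose (k - 1) : ℝ) * (1 / c) ^ (k - 1)
          * (((m : ℝ) - k + 2) / ((m : ℝ) - n * k + n + 1)) := by
        rw [hfinal]
end

section
/- The multinomial coefficient is maximized at the balanced partition: for any s_1, ..., s_d ≥ 0 with ∑ s_i = N, the multinomial coefficient N!/(s_1!⋯s_d!) is at most N!/(⌊N/d⌋!)^d. -/
private lemma key_fact (d m : ℕ) : ∀ k (s : Fin d → ℕ), (∑ i, (m - s i)) = k →
    m * d ≤ ∑ i, s i → m.factorial ^ d ≤ ∏ i, (s i).factorial := by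
  intro k
  induction k using Nat.strong_induction_on with
  | _ k ih =>
    intro s hk hsum
    rcases Nat.eq_zero_or_pos k with hk0 | hkpos
    · -- every s i ≥ m
      subst hk0
      have hall : ∀ i, m ≤ s i := by
        intro i
        have := Finset.sum_eq_zero_iff.mp hk i (Finset.mem_univ i)
        omega
      calc m.factorial ^ d = ∏ _i : Fin d, m.factorial := by
            simp [Finset.prod_const]
        _ ≤ ∏ i, (s i).factorial := by
            apply Finset.prod_le_prod
            · intro i _; positivity
            · intro i _; exact Nat.factorial_le (hall i)
    · -- exists i with s i < m
      have hi : ∃ i, s i < m := by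
        by_contra h
        push_neg at h
        have : (∑ i, (m - s i)) = 0 := by
          apply Finset.sum_eq_zero
          intro i _
          exact Nat.sub_eq_zero_of_le (h i)
        omega
      obtain ⟨i, hi⟩ := hi
      have hj : ∃ j, m < s j := by
        by_contra h
        push_neg at h
        have h1 : ∑ x, s x < ∑ _x : Fin d, m := by
          apply Finset.sum_lt_sum
          · intro x _; exact h x
          · exact ⟨i, Finset.mem_univ i, hi⟩
        have h2 : (∑ _x : Fin d, m) = d * m := by
          simp [Finset.sum_const, Finset.card_univ]
        have h3 : d * m = m * d := Nat.mul_comm d m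
        omega
      obtain ⟨j, hj⟩ := hj
      have hij : i ≠ j := by rintro rfl; omega
      set s' : Fin d → ℕ :=
        Function.update (Function.update s j (s j - 1)) i (s i + 1) with hs'
      have hs'i : s' i = s i + 1 := by simp [hs']
      have hs'j : s' j = s j - 1 := by
        simp [hs', Function.update_of_ne (Ne.symm hij)]
      have hs'o : ∀ x, x ≠ i → x ≠ j → s' x = s x := by
        intro x hx hy
        simp [hs', Function.update_of_ne hx, Function.update_of_ne hy]
      have hmemj : j ∈ Finset.univ.erase i :=
        Finset.mem_erase.mpr ⟨hij.symm, Finset.mem_univ j⟩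
      have hrest : ∏ x ∈ (Finset.univ.erase i).erase j, (s' x).factorial
          = ∏ x ∈ (Finset.univ.erase i).erase j, (s x).factorial := by
        apply Finset.prod_congr rfl
        intro x hx
        rw [Finset.mem_erase, Finset.mem_erase] at hx
        rw [hs'o x hx.2.1 hx.1]
      have e1 : ∏ x, (s' x).factorial
          = (s' i).factorial * ((s' j).factorial *
            ∏ x ∈ (Finset.univ.erase i).erase j, (s' x).factorial) := by
        rw [← Finset.mul_prod_erase _ _ (Finset.mem_univ i),
          ← Finset.mul_prod_erase _ _ hmemj]
      have e2 : ∏ x, (s x).factorial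
          = (s i).factorial * ((s j).factorial *
            ∏ x ∈ (Finset.univ.erase i).erase j, (s x).factorial) := by
        rw [← Finset.mul_prod_erase _ _ (Finset.mem_univ i),
          ← Finset.mul_prod_erase _ _ hmemj]
      have hsum' : ∑ x, s' x = ∑ x, s x := by
        have f1 : ∑ x, s' x
            = s' i + (s' j + ∑ x ∈ (Finset.univ.erase i).erase j, s' x) := by
          rw [← Finset.add_sum_erase _ _ (Finset.mem_univ i),
            ← Finset.add_sum_erase _ _ hmemj]
        have f2 : ∑ x, s x
            = s i + (s j + ∑ x ∈ (Finset.univ.erase i).erase j, s x) := by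
          rw [← Finset.add_sum_erase _ _ (Finset.mem_univ i),
            ← Finset.add_sum_erase _ _ hmemj]
        have f3 : ∑ x ∈ (Finset.univ.erase i).erase j, s' x
            = ∑ x ∈ (Finset.univ.erase i).erase j, s x := by
          apply Finset.sum_congr rfl
          intro x hx
          rw [Finset.mem_erase, Finset.mem_erase] at hx
          rw [hs'o x hx.2.1 hx.1]
        rw [f1, f2, f3, hs'i, hs'j]
        omega
      have hk' : (∑ x, (m - s' x)) < k := by
        rw [← hk]
        apply Finset.sum_lt_sum
        · intro x _
          by_cases hx : x = i
          · subst hx; rw [hs'i]; omega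
          · by_cases hy : x = j
            · subst hy; rw [hs'j]; omega
            · rw [hs'o x hx hy]
        · refine ⟨i, Finset.mem_univ i, ?_⟩
          rw [hs'i]; omega
      have hprod : ∏ x, (s' x).factorial ≤ ∏ x, (s x).factorial := by
        rw [e1, e2, hs'i, hs'j, hrest, ← mul_assoc, ← mul_assoc]
        apply Nat.mul_le_mul_right
        have h1 : (s i + 1).factorial = (s i + 1) * (s i).factorial :=
          Nat.factorial_succ _
        have h2 : (s j).factorial = s j * (s j - 1).factorial := by
          conv_lhs => rw [show s j = (s j - 1) + 1 by omega]
          rw [Nat.factorial_succ]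
          congr 1
          omega
        rw [h1, h2]
        have hle : s i + 1 ≤ s j := by omega
        calc (s i + 1) * (s i).factorial * (s j - 1).factorial
            ≤ s j * (s i).factorial * (s j - 1).factorial := by
              apply Nat.mul_le_mul_right
              exact Nat.mul_le_mul_right _ hle
          _ = (s i).factorial * (s j * (s j - 1).factorial) := by ring
      exact le_trans (ih _ hk' s' rfl (by omega)) hprod

/-- The multinomial coefficient is maximized at the balanced
partition: for nonnegative `s_1,…,s_d` summing to `N`,
`N!/(s_1!⋯s_d!) ≤ N!/(⌊N/d⌋!)^d`. -/
theorem stmt_11 (N d : ℕ) (hN : 1 ≤ N) (hd : 1 ≤ d)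
    (s : Fin d → ℕ) (hs : ∑ i, s i = N) :
    (N.factorial : ℝ) / (∏ i, ((s i).factorial : ℝ))
      ≤ (N.factorial : ℝ) / ((N / d).factorial : ℝ) ^ d := by
  have key : (N / d).factorial ^ d ≤ ∏ i, (s i).factorial := by
    apply key_fact d (N / d) _ s rfl
    rw [hs]
    exact Nat.div_mul_le_self N d
  have h1 : (0:ℝ) < ((N / d).factorial : ℝ) ^ d := by positivity
  have h2 : ((N / d).factorial : ℝ) ^ d ≤ ∏ i, ((s i).factorial : ℝ) := by
    push_cast
    exact_mod_cast key
  exact div_le_div_of_nonneg_left (by positivity) h1 h2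
end

section
/- Let p(m, f, d) = (mf)!/((⌊mf/d⌋!)^d) · (1/d)^(mf). With M users each sending F one-hot updates uniformly over d coordinates, independently, over K independent iterations, the probability that the coordinate-wise sums equal any fixed sequence s^1, ..., s^K (each with ℓ1-norm MF) is at most p(M, F, d)^K. -/
open Finset

private lemma factA (a b : ℕ) : a.factorial * (a + 1) ^ b ≤ (a + b).factorial := by
  induction b with
  | zero => simp
  | succ b ih =>
    rw [pow_succ, ← mul_assoc]
    calc a.factorial * (a + 1) ^ b * (a + 1) ≤ (a + b).factorial * (a + 1) :=
          Nat.mul_le_mul_right _ ih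
      _ ≤ (a + b).factorial * (a + b + 1) := Nat.mul_le_mul_left _ (by omega)
      _ = (a + (b + 1)).factorial := by
          rw [show a + (b + 1) = (a + b) + 1 by omega, Nat.factorial_succ]; ring

private lemma factB (a b : ℕ) : (a + b).factorial ≤ a.factorial * (a + b) ^ b := by
  induction b with
  | zero => simp
  | succ b ih =>
    calc (a + (b + 1)).factorial = (a + b + 1) * (a + b).factorial := by
          rw [show a + (b + 1) = (a + b) + 1 by omega, Nat.factorial_succ]
      _ ≤ (a + b + 1) * (a.factorial * (a + b) ^ b) := Nat.mul_le_mul_left _ ih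
      _ ≤ (a + b + 1) * (a.factorial * (a + b + 1) ^ b) := by
          exact Nat.mul_le_mul_left _ (Nat.mul_le_mul_left _
            (Nat.pow_le_pow_left (by omega) b))
      _ = a.factorial * (a + (b + 1)) ^ (b + 1) := by
          rw [show a + (b + 1) = (a + b) + 1 by omega, pow_succ]; ring

private lemma point (q a : ℕ) :
    q.factorial * (q + 1) ^ (a - q) ≤ a.factorial * q ^ (q - a) := by
  rcases le_or_gt q a with h | h
  · obtain ⟨b, rfl⟩ := Nat.exists_eq_add_of_le h
    simpa [Nat.add_sub_cancel_left, Nat.sub_eq_zero_of_le h] using factA q b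
  · obtain ⟨b, rfl⟩ := Nat.exists_eq_add_of_le h.le
    have h1 : a + b - a = b := by omega
    have h2 : a - (a + b) = 0 := by omega
    simpa [h1, h2] using factB a b

/-- Product of factorials is minimized at the balanced partition. -/
private lemma prod_fact_ge (d n : ℕ) (a : Fin d → ℕ) (h : ∑ i, a i = n) :
    ((n / d).factorial) ^ d ≤ ∏ i, (a i).factorial := by
  set q := n / d with hq
  rcases Nat.eq_zero_or_pos q with hq0 | hq0
  · rw [hq0]
    simpa using Finset.one_le_prod' (fun i _ => Nat.one_le_iff_ne_zero.mpr
      (Nat.factorial_ne_zero (a i)))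
  · set S := ∑ i, (a i - q) with hS
    set T := ∑ i, (q - a i) with hT
    have hqd : d * q ≤ n := by rw [mul_comm]; exact Nat.div_mul_le_self n d
    have hSTeq : S + d * q = T + n := by
      have e : ∑ i, ((a i - q) + q) = ∑ i, ((q - a i) + a i) :=
        Finset.sum_congr rfl (fun i _ => by omega)
      simp only [Finset.sum_add_distrib, Finset.sum_const, card_univ,
        Fintype.card_fin, smul_eq_mul, h] at e
      omega
    have hTS : T ≤ S := by omega
    have H : ∏ i, (q.factorial * (q + 1) ^ (a i - q)) ≤
        ∏ i, ((a i).factorial * q ^ (q - a i)) :=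
      Finset.prod_le_prod' (fun i _ => point q (a i))
    rw [Finset.prod_mul_distrib, Finset.prod_mul_distrib, Finset.prod_const,
      Finset.prod_pow_eq_pow_sum, Finset.prod_pow_eq_pow_sum, card_univ,
      Fintype.card_fin, ← hS, ← hT] at H
    have hqT : q ^ T ≤ (q + 1) ^ S :=
      le_trans (Nat.pow_le_pow_left (by omega) T) (Nat.pow_le_pow_right (by omega) hTS)
    have H2 : q.factorial ^ d * (q + 1) ^ S ≤ (∏ i, (a i).factorial) * (q + 1) ^ S :=
      le_trans H (Nat.mul_le_mul_left _ hqT)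
    exact Nat.le_of_mul_le_mul_right H2 (pow_pos (by omega) S)

/-- Counting maps with prescribed fiber sizes: at most `n! / ∏ (a i)!`. -/
private lemma count_mul_le (d : ℕ) (X : Type) [Fintype X] (a : Fin d → ℕ) :
    Nat.card {f : X → Fin d // ∀ i, (Finset.univ.filter (fun p => f p = i)).card = a i}
      * ∏ i, (a i).factorial ≤ (Fintype.card X).factorial := by
  classical
  set S := {f : X → Fin d // ∀ i, (Finset.univ.filter (fun p => f p = i)).card = a i}
  rcases isEmpty_or_nonempty S with hS | hS
  · simp [Nat.card_of_isEmpty]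
  · obtain ⟨f0⟩ := hS
    have hsum : ∑ i, a i = Fintype.card X := by
      calc ∑ i, a i = ∑ i, (Finset.univ.filter (fun p => f0.1 p = i)).card :=
            Finset.sum_congr rfl (fun i _ => (f0.2 i).symm)
        _ = (Finset.univ : Finset X).card :=
            (Finset.card_eq_sum_card_fiberwise (fun x _ => Finset.mem_univ _)).symm
        _ = Fintype.card X := Finset.card_univ
    have hE : ∀ (f : S) (i : Fin d), Fintype.card {x // f.1 x = i} = a i := by
      intro f i
      rw [Fintype.card_subtype]
      exact f.2 i
    let E : ∀ (f : S) (i : Fin d), {x // f.1 x = i} ≃ Fin (a i) :=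
      fun f i => Fintype.equivFinOfCardEq (hE f i)
    let Φ : S × (∀ i, Equiv.Perm (Fin (a i))) → (X ≃ Σ i : Fin d, Fin (a i)) :=
      fun fp => (Equiv.sigmaFiberEquiv fp.1.1).symm.trans
        (Equiv.sigmaCongrRight (fun i => (E fp.1 i).trans (fp.2 i)))
    have hΦ : ∀ (fp : S × (∀ i, Equiv.Perm (Fin (a i)))) (x : X),
        Φ fp x = ⟨fp.1.1 x, (fp.2 (fp.1.1 x)) (E fp.1 (fp.1.1 x) ⟨x, rfl⟩)⟩ :=
      fun fp x => rfl
    have hinj : Function.Injective Φ := by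
      rintro ⟨f, π⟩ ⟨f', π'⟩ h
      have happ : ∀ x : X, Φ (⟨f, π⟩) x = Φ (⟨f', π'⟩) x :=
        fun x => congrArg (fun (e : X ≃ Σ i : Fin d, Fin (a i)) => e x) h
      have hff : f = f' := by
        apply Subtype.ext; funext x
        have := congrArg Sigma.fst (happ x)
        simpa [hΦ] using this
      subst hff
      have key : ∀ x : X,
          π (f.1 x) (E f (f.1 x) ⟨x, rfl⟩) = π' (f.1 x) (E f (f.1 x) ⟨x, rfl⟩) := by
        intro x
        have hx := happ x
        rw [hΦ, hΦ] at hx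
        exact eq_of_heq (Sigma.mk.inj_iff.mp hx).2
      have hππ : π = π' := by
        funext i
        apply Equiv.ext
        intro j
        obtain ⟨⟨x, hfx⟩, hj⟩ : ∃ y : {z // f.1 z = i}, E f i y = j :=
          ⟨(E f i).symm j, (E f i).apply_symm_apply j⟩
        subst hfx
        rw [← hj]
        exact key x
      rw [hππ]
    have hcardT : Nat.card (X ≃ Σ i : Fin d, Fin (a i)) = (Fintype.card X).factorial := by
      have e : X ≃ Σ i : Fin d, Fin (a i) :=
        Fintype.equivOfCardEq (by simp [Fintype.card_sigma, hsum])
      rw [Nat.card_eq_fintype_card, Fintype.card_equiv e]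
    calc Nat.card S * ∏ i, (a i).factorial
        = Nat.card (S × ∀ i, Equiv.Perm (Fin (a i))) := by
          rw [Nat.card_prod, Nat.card_pi]
          congr 1
          exact Finset.prod_congr rfl (fun i _ => by
            simp [Nat.card_eq_fintype_card, Fintype.card_perm, Fintype.card_fin])
      _ ≤ Nat.card (X ≃ Σ i : Fin d, Fin (a i)) :=
          Nat.card_le_card_of_injective Φ hinj
      _ = (Fintype.card X).factorial := hcardT

/-- With `M` users each sending `F` uniform one-hot updates over `d`
coordinates, independently over `K` independent iterations (modeled by a uniformly
random `g : Fin K → Fin M × Fin F → Fin d`), the probability that the observed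
coordinatewise sums equal a fixed sequence `s^1,…,s^K` (each of ℓ1-norm `MF`)
is at most `p(M,F,d)^K`, where `p(m,f,d) = (mf)!/((⌊mf/d⌋!)^d * d^(mf))`. -/
theorem stmt_12 (M F d K : ℕ) (hM : 1 ≤ M) (hF : 1 ≤ F) (hd : 1 ≤ d) (hK : 1 ≤ K)
    (s : Fin K → Fin d → ℕ) (hs : ∀ k, ∑ i, s k i = M * F) :
    (Nat.card {g : Fin K → Fin M × Fin F → Fin d //
        ∀ k i, (Finset.univ.filter (fun p => g k p = i)).card = s k i} : ℝ)
        / (d : ℝ) ^ (M * F * K)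
      ≤ (((M * F).factorial : ℝ)
          / (((M * F / d).factorial : ℝ) ^ d * (d : ℝ) ^ (M * F))) ^ K := by
  classical
  set q := M * F / d with hq
  set N : Fin K → ℕ := fun k =>
    Nat.card {f : Fin M × Fin F → Fin d //
      ∀ i, (Finset.univ.filter (fun p => f p = i)).card = s k i} with hN
  have hX : Fintype.card (Fin M × Fin F) = M * F := by simp
  have key : ∀ k, N k * q.factorial ^ d ≤ (M * F).factorial := by
    intro k
    calc N k * q.factorial ^ d ≤ N k * ∏ i, (s k i).factorial :=
          Nat.mul_le_mul_left _ (prod_fact_ge d (M * F) (s k) (hs k))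
      _ ≤ (Fintype.card (Fin M × Fin F)).factorial := count_mul_le d _ (s k)
      _ = (M * F).factorial := by rw [hX]
  have hcard : Nat.card {g : Fin K → Fin M × Fin F → Fin d //
      ∀ k i, (Finset.univ.filter (fun p => g k p = i)).card = s k i} = ∏ k, N k := by
    rw [Nat.card_congr
      (Equiv.subtypePiEquivPi (p := fun k (f : Fin M × Fin F → Fin d) =>
        ∀ i, (Finset.univ.filter (fun p => f p = i)).card = s k i)), Nat.card_pi]
  have natkey : Nat.card {g : Fin K → Fin M × Fin F → Fin d //
      ∀ k i, (Finset.univ.filter (fun p => g k p = i)).card = s k i}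
        * q.factorial ^ (d * K) ≤ (M * F).factorial ^ K := by
    rw [hcard, pow_mul]
    calc (∏ k, N k) * (q.factorial ^ d) ^ K = ∏ k, (N k * q.factorial ^ d) := by
          rw [Finset.prod_mul_distrib, Finset.prod_const, card_univ, Fintype.card_fin]
      _ ≤ ∏ _k : Fin K, (M * F).factorial := Finset.prod_le_prod' (fun k _ => key k)
      _ = (M * F).factorial ^ K := by
          rw [Finset.prod_const, card_univ, Fintype.card_fin]
  have hd0 : (0 : ℝ) < (d : ℝ) := by exact_mod_cast hd
  have hq0 : (0 : ℝ) < (q.factorial : ℝ) := by exact_mod_cast q.factorial_pos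
  rw [div_pow, mul_pow, ← pow_mul, ← pow_mul, div_le_div_iff₀ (by positivity) (by positivity)]
  have hcast : (Nat.card {g : Fin K → Fin M × Fin F → Fin d //
      ∀ k i, (Finset.univ.filter (fun p => g k p = i)).card = s k i} : ℝ)
        * (q.factorial : ℝ) ^ (d * K) ≤ ((M * F).factorial : ℝ) ^ K := by
    exact_mod_cast natkey
  calc (Nat.card {g : Fin K → Fin M × Fin F → Fin d //
        ∀ k i, (Finset.univ.filter (fun p => g k p = i)).card = s k i} : ℝ)
        * ((q.factorial : ℝ) ^ (d * K) * (d : ℝ) ^ (M * F * K))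
      = ((Nat.card {g : Fin K → Fin M × Fin F → Fin d //
          ∀ k i, (Finset.univ.filter (fun p => g k p = i)).card = s k i} : ℝ)
          * (q.factorial : ℝ) ^ (d * K)) * (d : ℝ) ^ (M * F * K) := by ring
    _ ≤ ((M * F).factorial : ℝ) ^ K * (d : ℝ) ^ (M * F * K) :=
        mul_le_mul_of_nonneg_right hcast (by positivity)
end

section
/- Under the setup of the splitting privacy lemma, the absolute difference between Pr[∑_{m=1}^M X^{mk} = s^k for all k = 1..K] (world 1: all M users random) and Pr[∑_{m=1}^{M−1} X^{mk} + v^k = s^k for all k] (world 2: M−1 random users plus a fixed user with known update vectors v^k, ‖v^k‖₁ = F, v^k ≥ 0) is at most max{p(M, F, d), p(M−1, F, d)}^K, where p(m,f,d) = (mf)!/((⌊mf/d⌋!)^d · d^(mf)). -/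
open Finset


private lemma fact_le_left (q k : ℕ) : q.factorial * (q+1)^k ≤ (q+k).factorial := by
  induction k with
  | zero => simp
  | succ k ih =>
    rw [pow_succ, ← mul_assoc]
    calc q.factorial * (q+1)^k * (q+1) ≤ (q+k).factorial * (q+1) :=
          Nat.mul_le_mul_right _ ih
      _ ≤ (q+k).factorial * (q+k+1) := Nat.mul_le_mul_left _ (by omega)
      _ = (q+(k+1)).factorial := by
          rw [show q+(k+1) = (q+k)+1 from by ring, Nat.factorial_succ]; ring

private lemma fact_le_right (s k : ℕ) : (s + k).factorial ≤ s.factorial * (s+k)^k := by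
  induction k with
  | zero => simp
  | succ k ih =>
    calc (s+(k+1)).factorial = (s+k+1) * (s+k).factorial := by
          rw [show s+(k+1) = (s+k)+1 from by ring, Nat.factorial_succ]
      _ ≤ (s+k+1) * (s.factorial * (s+k)^k) := Nat.mul_le_mul_left _ ih
      _ ≤ s.factorial * (s+(k+1))^(k+1) := by
          rw [pow_succ]
          calc (s+k+1) * (s.factorial * (s+k)^k)
              = s.factorial * ((s+k)^k * (s+k+1)) := by ring
            _ ≤ s.factorial * ((s+(k+1))^k * (s+(k+1))) := by
                exact Nat.mul_le_mul_left _ (Nat.mul_le_mul (Nat.pow_le_pow_left (by omega) k) (by omega))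

private lemma term_ineq (q s : ℕ) : q.factorial * (q+1)^(s - q) ≤ s.factorial * q^(q - s) := by
  rcases le_total q s with h | h
  · have h0 : q - s = 0 := by omega
    rw [h0, pow_zero, mul_one]
    have := fact_le_left q (s - q)
    rwa [Nat.add_sub_cancel' h] at this
  · have h0 : s - q = 0 := by omega
    rw [h0, pow_zero, mul_one]
    have := fact_le_right s (q - s)
    rwa [Nat.add_sub_cancel' h] at this

private lemma balance (d n : ℕ) (t : Fin d → ℕ) (ht : ∑ i, t i = n) :
    ((n / d).factorial)^d ≤ ∏ i, (t i).factorial := by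
  set q := n / d with hq
  set A := ∑ i, (t i - q) with hA
  set B := ∑ i, (q - t i) with hB
  have key : q.factorial^d * (q+1)^A ≤ (∏ i, (t i).factorial) * q^B := by
    have h1 : ∏ i : Fin d, (q.factorial * (q+1)^(t i - q))
        ≤ ∏ i : Fin d, ((t i).factorial * q^(q - t i)) :=
      Finset.prod_le_prod' (fun i _ => term_ineq q (t i))
    rw [Finset.prod_mul_distrib, Finset.prod_mul_distrib, Finset.prod_const,
      Finset.prod_pow_eq_pow_sum, Finset.prod_pow_eq_pow_sum, card_univ, Fintype.card_fin] at h1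
    exact h1
  have hqd : q * d ≤ n := by rw [hq]; exact Nat.div_mul_le_self n d
  have hAB : B + n = A + q * d := by
    calc B + n = ∑ i, ((q - t i) + t i) := by rw [← ht, hB, Finset.sum_add_distrib]
      _ = ∑ i, ((t i - q) + q) := Finset.sum_congr rfl (fun i _ => by omega)
      _ = A + q * d := by
          rw [Finset.sum_add_distrib, Finset.sum_const, card_univ, Fintype.card_fin,
            smul_eq_mul, ← hA]; ring
  have hBA : B ≤ A := by omega
  rcases Nat.eq_zero_or_pos q with h0 | h0
  · rw [h0]; simp only [Nat.factorial_zero, one_pow]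
    exact Finset.one_le_prod' (fun i _ => Nat.one_le_iff_ne_zero.mpr (Nat.factorial_ne_zero _))
  · have h2 : q.factorial^d * q^B ≤ (∏ i, (t i).factorial) * q^B :=
      calc q.factorial^d * q^B ≤ q.factorial^d * (q+1)^A := by
            exact Nat.mul_le_mul_left _ (le_trans (Nat.pow_le_pow_left (by omega) B)
              (Nat.pow_le_pow_right (by omega) hBA))
        _ ≤ (∏ i, (t i).factorial) * q^B := key
    exact Nat.le_of_mul_le_mul_right h2 (pow_pos h0 B)


private lemma count_le (α : Type) [Fintype α] [DecidableEq α] (d : ℕ) (t : Fin d → ℕ)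
    (ht : ∑ i, t i = Fintype.card α) :
    Nat.card {g : α → Fin d // ∀ i, (univ.filter (fun a => g a = i)).card = t i}
      * ∏ i, (t i).factorial ≤ (Fintype.card α).factorial := by
  classical
  set S := {g : α → Fin d // ∀ i, (univ.filter (fun a => g a = i)).card = t i} with hS
  have E : ∀ (g : S) (i : Fin d), {a // g.1 a = i} ≃ Fin (t i) := fun g i =>
    Fintype.equivFinOfCardEq (by
      rw [Fintype.card_subtype]; exact g.2 i)
  let Φ : S × (∀ i, Equiv.Perm (Fin (t i))) → (α ≃ Σ i, Fin (t i)) := fun x =>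
    (Equiv.sigmaFiberEquiv x.1.1).symm.trans
      (Equiv.sigmaCongrRight (fun i => (E x.1 i).trans (x.2 i)))
  have hΦval : ∀ (g : S) (σ : ∀ i, Equiv.Perm (Fin (t i))) (a : α),
      Φ (g, σ) a = ⟨g.1 a, (σ (g.1 a)) (E g (g.1 a) ⟨a, rfl⟩)⟩ := fun g σ a => rfl
  have hinj : Function.Injective Φ := by
    rintro ⟨g, σ⟩ ⟨g', σ'⟩ h
    have h' : ∀ a, Φ (g, σ) a = Φ (g', σ') a := fun a => by rw [h]
    have hg : g = g' := by
      apply Subtype.ext; funext a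
      have := h' a
      rw [hΦval, hΦval] at this
      exact congrArg Sigma.fst this
    subst hg
    have hσ : σ = σ' := by
      funext i; apply Equiv.ext; intro x
      obtain ⟨⟨a, ha⟩, hax⟩ := (E g i).surjective x
      subst ha
      have := h' a
      rw [hΦval, hΦval] at this
      have h2 := eq_of_heq (Sigma.mk.inj_iff.mp this).2
      rw [← hax]
      exact h2
    rw [hσ]
  have hcard := Fintype.card_le_of_injective Φ hinj
  have e0 : α ≃ Σ i, Fin (t i) :=
    Fintype.equivOfCardEq (by simp [Fintype.card_sigma, ht])
  rw [Fintype.card_prod, Fintype.card_pi, Fintype.card_equiv e0] at hcard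
  simp only [Fintype.card_perm, Fintype.card_fin] at hcard
  rwa [Nat.card_eq_fintype_card]


private lemma key_bound (α : Type) [Fintype α] [DecidableEq α] (d : ℕ) (t : Fin d → ℕ)
    (ht : ∑ i, t i = Fintype.card α) :
    Nat.card {g : α → Fin d // ∀ i, (univ.filter (fun a => g a = i)).card = t i}
      * ((Fintype.card α / d).factorial)^d ≤ (Fintype.card α).factorial :=
  le_trans (Nat.mul_le_mul_left _ (balance d (Fintype.card α) t ht)) (count_le α d t ht)

private lemma key_bound2 (α : Type) [Fintype α] [DecidableEq α] (d : ℕ) (v s : Fin d → ℕ) :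
    Nat.card {g : α → Fin d // ∀ i, (univ.filter (fun a => g a = i)).card + v i = s i}
      * ((Fintype.card α / d).factorial)^d ≤ (Fintype.card α).factorial := by
  classical
  rcases isEmpty_or_nonempty
    {g : α → Fin d // ∀ i, (univ.filter (fun a => g a = i)).card + v i = s i} with he | hne
  · rw [Nat.card_of_isEmpty]; simp
  · obtain ⟨⟨g0, hg0⟩⟩ := hne
    have t : Fin d → ℕ := fun i => s i - v i
    have hvs : ∀ i, v i ≤ s i := fun i => by have := hg0 i; omega
    have h1 : ∀ i, (univ.filter (fun a => g0 a = i)).card = s i - v i := fun i => by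
      have := hg0 i; omega
    have h2 : ∑ i, (univ.filter (fun a => g0 a = i)).card = Fintype.card α := by
      rw [← card_univ]
      exact (Finset.card_eq_sum_card_fiberwise (fun a _ => mem_univ (g0 a))).symm
    have hsum : ∑ i, (s i - v i) = Fintype.card α := by
      rw [← h2]; exact Finset.sum_congr rfl (fun i _ => (h1 i).symm)
    have hequiv : {g : α → Fin d // ∀ i, (univ.filter (fun a => g a = i)).card + v i = s i}
        ≃ {g : α → Fin d // ∀ i, (univ.filter (fun a => g a = i)).card = s i - v i} :=
      Equiv.subtypeEquivRight (fun g => by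
        constructor
        · intro h i; have ha := h i; have hb := hvs i; omega
        · intro h i; have ha := h i; have hb := hvs i; omega)
    rw [Nat.card_congr hequiv]
    exact key_bound α d (fun i => s i - v i) hsum

private lemma div_le_div_helper {a b c e : ℝ} (hb : 0 < b) (he : 0 < e) (h : a * b ≤ c) :
    a / e ≤ c / (b * e) := by
  rw [div_le_div_iff₀ he (by positivity)]
  calc a * (b * e) = (a * b) * e := by ring
    _ ≤ c * e := mul_le_mul_of_nonneg_right h he.le

/-- splitting privacy lemma: the absolute difference between the
probability (world 1) that the sums of all `M` users' random one-hot updates equal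
`s^k` in every iteration `k`, and the probability (world 2) that the sums of `M-1`
random users' updates plus the fixed user's known updates `v^k` (with `‖v^k‖₁ = F`)
equal `s^k` in every iteration, is at most `max{p(M,F,d), p(M-1,F,d)}^K`, where
`p(m,f,d) = (mf)!/((⌊mf/d⌋!)^d * d^(mf))`. -/
theorem stmt_13 (M F d K : ℕ) (hM : 2 ≤ M) (hF : 1 ≤ F) (hd : 1 ≤ d) (hK : 1 ≤ K)
    (v s : Fin K → Fin d → ℕ) (hv : ∀ k, ∑ i, v k i = F) (hs : ∀ k, ∑ i, s k i = M * F) :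
    |(Nat.card {g : Fin K → Fin M × Fin F → Fin d //
          ∀ k i, (Finset.univ.filter (fun p => g k p = i)).card = s k i} : ℝ)
          / (d : ℝ) ^ (M * F * K)
      - (Nat.card {g : Fin K → Fin (M - 1) × Fin F → Fin d //
          ∀ k i, (Finset.univ.filter (fun p => g k p = i)).card + v k i = s k i} : ℝ)
          / (d : ℝ) ^ ((M - 1) * F * K)|
      ≤ (max
          (((M * F).factorial : ℝ)
            / (((M * F / d).factorial : ℝ) ^ d * (d : ℝ) ^ (M * F)))
          ((((M - 1) * F).factorial : ℝ)
            / ((((M - 1) * F / d).factorial : ℝ) ^ d * (d : ℝ) ^ ((M - 1) * F)))) ^ K := by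
  classical
  have hdpos : (0:ℝ) < (d:ℝ) := by exact_mod_cast hd
  -- World 1 product decomposition
  have e1 : {g : Fin K → Fin M × Fin F → Fin d //
        ∀ k i, (Finset.univ.filter (fun p => g k p = i)).card = s k i}
      ≃ ∀ k, {b : Fin M × Fin F → Fin d //
        ∀ i, (Finset.univ.filter (fun p => b p = i)).card = s k i} :=
    Equiv.subtypePiEquivPi
      (β := fun _ : Fin K => Fin M × Fin F → Fin d)
      (p := fun k b => ∀ i, (Finset.univ.filter (fun p => b p = i)).card = s k i)
  have e2 : {g : Fin K → Fin (M - 1) × Fin F → Fin d //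
        ∀ k i, (Finset.univ.filter (fun p => g k p = i)).card + v k i = s k i}
      ≃ ∀ k, {b : Fin (M - 1) × Fin F → Fin d //
        ∀ i, (Finset.univ.filter (fun p => b p = i)).card + v k i = s k i} :=
    Equiv.subtypePiEquivPi
      (β := fun _ : Fin K => Fin (M - 1) × Fin F → Fin d)
      (p := fun k b => ∀ i, (Finset.univ.filter (fun p => b p = i)).card + v k i = s k i)
  set c1 : Fin K → ℕ := fun k => Nat.card {b : Fin M × Fin F → Fin d //
        ∀ i, (Finset.univ.filter (fun p => b p = i)).card = s k i} with hc1def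
  set c2 : Fin K → ℕ := fun k => Nat.card {b : Fin (M - 1) × Fin F → Fin d //
        ∀ i, (Finset.univ.filter (fun p => b p = i)).card + v k i = s k i} with hc2def
  have hN1 : Nat.card {g : Fin K → Fin M × Fin F → Fin d //
        ∀ k i, (Finset.univ.filter (fun p => g k p = i)).card = s k i} = ∏ k, c1 k := by
    rw [Nat.card_congr e1, Nat.card_pi]
  have hN2 : Nat.card {g : Fin K → Fin (M - 1) × Fin F → Fin d //
        ∀ k i, (Finset.univ.filter (fun p => g k p = i)).card + v k i = s k i} = ∏ k, c2 k := by
    rw [Nat.card_congr e2, Nat.card_pi]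
  have hcard1 : Fintype.card (Fin M × Fin F) = M * F := by simp
  have hcard2 : Fintype.card (Fin (M-1) × Fin F) = (M-1) * F := by simp
  have hb1 : ∀ k, c1 k * ((M * F / d).factorial)^d ≤ (M * F).factorial := by
    intro k
    have := key_bound (Fin M × Fin F) d (s k) (by rw [hcard1]; exact hs k)
    rwa [hcard1] at this
  have hb2 : ∀ k, c2 k * (((M-1) * F / d).factorial)^d ≤ ((M-1) * F).factorial := by
    intro k
    have := key_bound2 (Fin (M-1) × Fin F) d (v k) (s k)
    rwa [hcard2] at this
  -- natural number bounds on products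
  have hN1Q : (∏ k, c1 k) * (((M * F / d).factorial)^d)^K ≤ ((M * F).factorial)^K := by
    calc (∏ k, c1 k) * (((M * F / d).factorial)^d)^K
        = ∏ k : Fin K, (c1 k * ((M * F / d).factorial)^d) := by
          rw [Finset.prod_mul_distrib, Finset.prod_const, card_univ, Fintype.card_fin]
      _ ≤ ∏ _k : Fin K, (M * F).factorial := Finset.prod_le_prod' (fun k _ => hb1 k)
      _ = ((M * F).factorial)^K := by
          rw [Finset.prod_const, card_univ, Fintype.card_fin]
  have hN2Q : (∏ k, c2 k) * ((((M-1) * F / d).factorial)^d)^K ≤ (((M-1) * F).factorial)^K := by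
    calc (∏ k, c2 k) * ((((M-1) * F / d).factorial)^d)^K
        = ∏ k : Fin K, (c2 k * (((M-1) * F / d).factorial)^d) := by
          rw [Finset.prod_mul_distrib, Finset.prod_const, card_univ, Fintype.card_fin]
      _ ≤ ∏ _k : Fin K, ((M-1) * F).factorial := Finset.prod_le_prod' (fun k _ => hb2 k)
      _ = (((M-1) * F).factorial)^K := by
          rw [Finset.prod_const, card_univ, Fintype.card_fin]
  set p1 : ℝ := ((M * F).factorial : ℝ) / (((M * F / d).factorial : ℝ) ^ d * (d : ℝ) ^ (M * F))
    with hp1def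
  set p2 : ℝ := (((M-1) * F).factorial : ℝ)
      / ((((M-1) * F / d).factorial : ℝ) ^ d * (d : ℝ) ^ ((M-1) * F)) with hp2def
  have hp1nn : 0 ≤ p1 := by rw [hp1def]; positivity
  have hp2nn : 0 ≤ p2 := by rw [hp2def]; positivity
  have hP1 : ((∏ k, c1 k : ℕ) : ℝ) / (d : ℝ) ^ (M * F * K) ≤ p1 ^ K := by
    have key : ((∏ k, c1 k : ℕ) : ℝ) * ((((M * F / d).factorial : ℝ))^d)^K
        ≤ (((M * F).factorial : ℝ))^K := by exact_mod_cast hN1Q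
    calc ((∏ k, c1 k : ℕ) : ℝ) / (d : ℝ) ^ (M * F * K)
        = ((∏ k, c1 k : ℕ) : ℝ) / ((d : ℝ) ^ (M * F))^K := by rw [← pow_mul]
      _ ≤ (((M * F).factorial : ℝ))^K
            / (((((M * F / d).factorial : ℝ))^d)^K * ((d : ℝ) ^ (M * F))^K) :=
          div_le_div_helper (by positivity) (by positivity) key
      _ = p1 ^ K := by rw [← mul_pow, hp1def, div_pow]
  have hP2 : ((∏ k, c2 k : ℕ) : ℝ) / (d : ℝ) ^ ((M-1) * F * K) ≤ p2 ^ K := by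
    have key : ((∏ k, c2 k : ℕ) : ℝ) * (((((M-1) * F / d).factorial : ℝ))^d)^K
        ≤ ((((M-1) * F).factorial : ℝ))^K := by exact_mod_cast hN2Q
    calc ((∏ k, c2 k : ℕ) : ℝ) / (d : ℝ) ^ ((M-1) * F * K)
        = ((∏ k, c2 k : ℕ) : ℝ) / ((d : ℝ) ^ ((M-1) * F))^K := by rw [← pow_mul]
      _ ≤ ((((M-1) * F).factorial : ℝ))^K
            / ((((((M-1) * F / d).factorial : ℝ))^d)^K * ((d : ℝ) ^ ((M-1) * F))^K) :=
          div_le_div_helper (by positivity) (by positivity) key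
      _ = p2 ^ K := by rw [← mul_pow, hp2def, div_pow]
  rw [hN1, hN2]
  have h1 : ((∏ k, c1 k : ℕ) : ℝ) / (d : ℝ) ^ (M * F * K) ≤ (max p1 p2) ^ K :=
    le_trans hP1 (pow_le_pow_left₀ hp1nn (le_max_left _ _) K)
  have h2 : ((∏ k, c2 k : ℕ) : ℝ) / (d : ℝ) ^ ((M-1) * F * K) ≤ (max p1 p2) ^ K :=
    le_trans hP2 (pow_le_pow_left₀ hp2nn (le_max_right _ _) K)
  have h3 : (0:ℝ) ≤ ((∏ k, c1 k : ℕ) : ℝ) / (d : ℝ) ^ (M * F * K) := by positivity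
  have h4 : (0:ℝ) ≤ ((∏ k, c2 k : ℕ) : ℝ) / (d : ℝ) ^ ((M-1) * F * K) := by positivity
  rw [abs_sub_le_iff]
  constructor <;> linarith
end
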